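/- For every infinite set of real numbers X, the following are equivalent: (1) X satisfies S₁(B_T,B_Γ); (2) no Borel image of X in [ℕ]^∞ is a tower, and every Borel image of X in ℕ^ℕ is bounded with respect to eventual dominance ≤*. -/

import Mathlib

open Set

namespace TauCoverPaper

/-- `a ⊆* b`: `a \ b` is finite. -/
def AlmostSubset (a b : Set ℕ) : Prop := (a \ b).Finite

/-- `Y` is linearly quasiordered by `⊆*`. -/
def LinQuasi (Y : Set (Set ℕ)) : Prop :=
  ∀ a ∈ Y, ∀ b ∈ Y, AlmostSubset a b ∨ AlmostSubset b a

/-- `a` is a pseudo-intersection of the family `Y`. -/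
def PseudoIntersection (a : Set ℕ) (Y : Set (Set ℕ)) : Prop :=
  a.Infinite ∧ ∀ b ∈ Y, AlmostSubset a b

/-- `Y` is centered: every nonempty finite subfamily has infinite intersection. -/
def Centered (Y : Set (Set ℕ)) : Prop :=
  ∀ F : Set (Set ℕ), F ⊆ Y → F.Finite → F.Nonempty → (⋂₀ F).Infinite

/-- A tower: a family of infinite subsets of `ℕ`, linearly quasiordered by `⊆*`,
with no pseudo-intersection. -/
def IsTower (Y : Set (Set ℕ)) : Prop :=
  (∀ a ∈ Y, a.Infinite) ∧ LinQuasi Y ∧ ¬ ∃ a, PseudoIntersection a Y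

variable {α : Type}

/-- A cover of the space `α`: the union is everything, and the whole space is
not a member. -/
def IsCover (𝒰 : Set (Set α)) : Prop := ⋃₀ 𝒰 = univ ∧ univ ∉ 𝒰

/-- A large cover: each point belongs to infinitely many members. -/
def IsLargeCover (𝒰 : Set (Set α)) : Prop :=
  IsCover 𝒰 ∧ ∀ x : α, {U ∈ 𝒰 | x ∈ U}.Infinite

/-- An ω-cover: each finite set is contained in some member. -/
def IsOmegaCover (𝒰 : Set (Set α)) : Prop :=
  IsCover 𝒰 ∧ ∀ F : Set α, F.Finite → ∃ U ∈ 𝒰, F ⊆ U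

/-- A γ-cover: infinite, and each point belongs to all but finitely many members. -/
def IsGammaCover (𝒰 : Set (Set α)) : Prop :=
  IsCover 𝒰 ∧ 𝒰.Infinite ∧ ∀ x : α, {U ∈ 𝒰 | x ∉ U}.Finite

/-- A τ-cover: a large cover such that for all `x, y`, one of the sets
`{U : x ∈ U, y ∉ U}`, `{U : y ∈ U, x ∉ U}` is finite. -/
def IsTauCover (𝒰 : Set (Set α)) : Prop :=
  IsLargeCover 𝒰 ∧ ∀ x y : α,
    {U ∈ 𝒰 | x ∈ U ∧ y ∉ U}.Finite ∨ {U ∈ 𝒰 | y ∈ U ∧ x ∉ U}.Finite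

/-- A τ*-cover: a large, countably infinite cover which, enumerated bijectively
as `⟨Uₙ⟩`, admits for each point `y` an infinite `r y ⊆ {n | y ∈ Uₙ}` such that
the family `{r y}` is linearly quasiordered by `⊆*`. -/
def IsTauStarCover (𝒰 : Set (Set α)) : Prop :=
  IsLargeCover 𝒰 ∧
  ∃ U : ℕ → Set α, Function.Injective U ∧ Set.range U = 𝒰 ∧
    ∃ r : α → Set ℕ,
      (∀ y : α, (r y).Infinite ∧ r y ⊆ {n | y ∈ U n}) ∧
      (∀ y z : α, AlmostSubset (r y) (r z) ∨ AlmostSubset (r z) (r y))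

/-- Ω : countable open ω-covers. -/
def OpenOmega (α : Type) [TopologicalSpace α] : Set (Set (Set α)) :=
  {𝒰 | 𝒰.Countable ∧ (∀ U ∈ 𝒰, IsOpen U) ∧ IsOmegaCover 𝒰}

/-- Γ : countable open γ-covers. -/
def OpenGamma (α : Type) [TopologicalSpace α] : Set (Set (Set α)) :=
  {𝒰 | 𝒰.Countable ∧ (∀ U ∈ 𝒰, IsOpen U) ∧ IsGammaCover 𝒰}

/-- T : countable open τ-covers. -/
def OpenTau (α : Type) [TopologicalSpace α] : Set (Set (Set α)) :=
  {𝒰 | 𝒰.Countable ∧ (∀ U ∈ 𝒰, IsOpen U) ∧ IsTauCover 𝒰}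

/-- T* : countable open τ*-covers. -/
def OpenTauStar (α : Type) [TopologicalSpace α] : Set (Set (Set α)) :=
  {𝒰 | 𝒰.Countable ∧ (∀ U ∈ 𝒰, IsOpen U) ∧ IsTauStarCover 𝒰}

/-- B_Ω : countable Borel ω-covers. -/
def BorelOmega (α : Type) [MeasurableSpace α] : Set (Set (Set α)) :=
  {𝒰 | 𝒰.Countable ∧ (∀ U ∈ 𝒰, MeasurableSet U) ∧ IsOmegaCover 𝒰}

/-- B_Γ : countable Borel γ-covers. -/
def BorelGamma (α : Type) [MeasurableSpace α] : Set (Set (Set α)) :=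
  {𝒰 | 𝒰.Countable ∧ (∀ U ∈ 𝒰, MeasurableSet U) ∧ IsGammaCover 𝒰}

/-- B_T : countable Borel τ-covers. -/
def BorelTau (α : Type) [MeasurableSpace α] : Set (Set (Set α)) :=
  {𝒰 | 𝒰.Countable ∧ (∀ U ∈ 𝒰, MeasurableSet U) ∧ IsTauCover 𝒰}

/-- The selection principle S₁(𝔘,𝔙). -/
def S1 (𝔘 𝔙 : Set (Set (Set α))) : Prop :=
  ∀ 𝒰 : ℕ → Set (Set α), (∀ n, 𝒰 n ∈ 𝔘) →
    ∃ V : ℕ → Set α, (∀ n, V n ∈ 𝒰 n) ∧ Set.range V ∈ 𝔙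

/-- The selection principle Sfin(𝔘,𝔙). -/
def Sfin (𝔘 𝔙 : Set (Set (Set α))) : Prop :=
  ∀ 𝒰 : ℕ → Set (Set α), (∀ n, 𝒰 n ∈ 𝔘) →
    ∃ F : ℕ → Set (Set α), (∀ n, (F n).Finite ∧ F n ⊆ 𝒰 n) ∧ (⋃ n, F n) ∈ 𝔙

/-- The selection principle Ufin(𝔘,𝔙). -/
def Ufin (𝔘 𝔙 : Set (Set (Set α))) : Prop :=
  ∀ 𝒰 : ℕ → Set (Set α), (∀ n, 𝒰 n ∈ 𝔘) →
    (∀ n, ¬ ∃ F : Set (Set α), F ⊆ 𝒰 n ∧ F.Finite ∧ ⋃₀ F = univ) →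
    ∃ F : ℕ → Set (Set α), (∀ n, (F n).Finite ∧ F n ⊆ 𝒰 n) ∧
      Set.range (fun n => ⋃₀ (F n)) ∈ 𝔙

/-- binom(𝔘,𝔙): each member of 𝔘 contains a subfamily belonging to 𝔙. -/
def Binom (𝔘 𝔙 : Set (Set (Set α))) : Prop :=
  ∀ 𝒰 ∈ 𝔘, ∃ 𝒱 ⊆ 𝒰, 𝒱 ∈ 𝔙

/-- Borel measurability of a map into `P(ℕ)` (identified with the Cantor
space via characteristic functions): each coordinate is measurable. -/
def BorelMeasSets {β : Type} [MeasurableSpace β] (f : β → Set ℕ) : Prop :=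
  ∀ n : ℕ, MeasurableSet {x | n ∈ f x}

/-- The excluded middle property for a family `Y ⊆ ℕ^ℕ`. -/
def ExcludedMiddleProp (Y : Set (ℕ → ℕ)) : Prop :=
  ∃ g : ℕ → ℕ,
    (∀ f ∈ Y, {n | f n < g n}.Infinite) ∧
    ∀ f ∈ Y, ∀ h ∈ Y,
      {n | f n < g n ∧ g n ≤ h n}.Finite ∨ {n | h n < g n ∧ g n ≤ f n}.Finite

/-- non(J): the minimal cardinality of a set of reals not satisfying `J`. -/
noncomputable def nonCard (J : Set ℝ → Prop) : Cardinal :=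
  sInf {c : Cardinal | ∃ X : Set ℝ, ¬ J X ∧ Cardinal.mk ↥X = c}

/-- add(J): the minimal cardinality of a family of sets of reals, each
satisfying `J`, whose union does not satisfy `J`. -/
noncomputable def addCard (J : Set ℝ → Prop) : Cardinal :=
  sInf {c : Cardinal | ∃ 𝔉 : Set (Set ℝ),
    (∀ A ∈ 𝔉, J A) ∧ ¬ J (⋃₀ 𝔉) ∧ Cardinal.mk ↥𝔉 = c}

/-- 𝔱 : the minimal cardinality of a tower. -/
noncomputable def towerCard : Cardinal :=
  sInf {c : Cardinal | ∃ Y : Set (Set ℕ), IsTower Y ∧ Cardinal.mk ↥Y = c}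


/-! ### Auxiliary lemmas -/

section AuxLemmas

open Classical

lemma almostSubset_refl (a : Set ℕ) : AlmostSubset a a := by
  simp [AlmostSubset]

lemma almostSubset_trans {a b c : Set ℕ} (h1 : AlmostSubset a b) (h2 : AlmostSubset b c) :
    AlmostSubset a c := by
  have hsub : a \ c ⊆ (a \ b) ∪ (b \ c) := by
    intro n hn
    by_cases hb : n ∈ b
    · exact Or.inr ⟨hb, hn.2⟩
    · exact Or.inl ⟨hn.1, hb⟩
  exact (h1.union h2).subset hsub

/-- In a `⊆*`-linearly quasiordered family, every finite nonempty subfamily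
has a `⊆*`-minimal element. -/
lemma exists_almost_min {β : Type*} {f : β → Set ℕ}
    (hlin : ∀ x y : β, AlmostSubset (f x) (f y) ∨ AlmostSubset (f y) (f x)) :
    ∀ s : Set β, s.Finite → s.Nonempty → ∃ z ∈ s, ∀ w ∈ s, AlmostSubset (f z) (f w) := by
  intro s hs
  refine Set.Finite.induction_on (motive := fun s _ => s.Nonempty → ∃ z ∈ s, ∀ w ∈ s, AlmostSubset (f z) (f w)) s hs (fun h => absurd rfl h.ne_empty) ?_
  clear hs s
  intro a s ha hs ih _
  rcases s.eq_empty_or_nonempty with rfl | hne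
  · exact ⟨a, Set.mem_insert _ _, by
      rintro w hw
      rcases hw with rfl | hw
      · exact almostSubset_refl _
      · exact absurd hw (Set.notMem_empty w)⟩
  · obtain ⟨z, hz, hzmin⟩ := ih hne
    rcases hlin a z with h | h
    · refine ⟨a, Set.mem_insert _ _, ?_⟩
      rintro w (rfl | hw)
      · exact almostSubset_refl _
      · exact almostSubset_trans h (hzmin w hw)
    · refine ⟨z, Set.mem_insert_of_mem _ hz, ?_⟩
      rintro w (rfl | hw)
      · exact h
      · exact hzmin w hw

/-- Pigeonhole: an infinite set covered by a finite family has an infinite piece. -/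
lemma exists_infinite_fiber' {γ δ : Type*} {s : Set γ} (hs : s.Infinite) {t : Set δ}
    (ht : t.Finite) {u : δ → Set γ} (hcov : s ⊆ ⋃ a ∈ t, u a) :
    ∃ a ∈ t, (s ∩ u a).Infinite := by
  by_contra h
  push_neg at h
  have hsub : s ⊆ ⋃ a ∈ t, (s ∩ u a) := by
    intro x hx
    rcases Set.mem_iUnion₂.mp (hcov hx) with ⟨a, ha, hxa⟩
    exact Set.mem_iUnion₂.mpr ⟨a, ha, hx, hxa⟩
  exact hs ((ht.biUnion h).subset hsub)

/-- A map `ℕ → Set γ` with infinite range has some value repeated... rather: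
if the range is finite, some fiber is infinite. -/
lemma exists_infinite_fiber_of_range_finite {γ : Type*} {V : ℕ → γ}
    (hfin : (Set.range V).Finite) : ∃ S, {n | V n = S}.Infinite := by
  by_contra h
  push_neg at h
  have hsub : (Set.univ : Set ℕ) ⊆ ⋃ S ∈ Set.range V, {n | V n = S} := by
    intro n _
    exact Set.mem_iUnion₂.mpr ⟨V n, ⟨n, rfl⟩, rfl⟩
  exact Set.infinite_univ ((hfin.biUnion (fun S _ => h S)).subset hsub)

/-- Every γ-cover is a τ-cover. -/
lemma IsGammaCover.isTauCover {𝒰 : Set (Set α)} (h : IsGammaCover 𝒰) : IsTauCover 𝒰 := by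
  obtain ⟨hc, hinf, hfin⟩ := h
  refine ⟨⟨hc, fun x => ?_⟩, fun x y => Or.inl ((hfin y).subset (fun U hU => ⟨hU.1, hU.2.2⟩))⟩
  have heq : {U | U ∈ 𝒰 ∧ x ∈ U} = 𝒰 \ {U | U ∈ 𝒰 ∧ x ∉ U} := by
    ext U
    constructor
    · rintro ⟨hU, hx⟩; exact ⟨hU, fun hc => hc.2 hx⟩
    · rintro ⟨hU, hc⟩
      refine ⟨hU, ?_⟩
      by_contra hx
      exact hc ⟨hU, hx⟩
  show {U | U ∈ 𝒰 ∧ x ∈ U}.Infinite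
  rw [heq]
  exact hinf.diff (hfin x)

/-- A sequence of distinct points, the `p`-th lying in the (infinite) set `Tset p`. -/
noncomputable def pickSeqAux {α : Type} (Tset : ℕ → Set α) (hT : ∀ p, (Tset p).Infinite) :
    ℕ → (α × Finset α)
  | 0 => (((hT 0).diff (Finset.finite_toSet ∅)).nonempty.some, {((hT 0).diff (Finset.finite_toSet ∅)).nonempty.some})
  | p+1 =>
      let prev := (pickSeqAux Tset hT p).2
      let x := ((hT (p+1)).diff (Finset.finite_toSet prev)).nonempty.some
      (x, insert x prev)

noncomputable def pickSeq {α : Type} (Tset : ℕ → Set α) (hT : ∀ p, (Tset p).Infinite) :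
    ℕ → α := fun p => (pickSeqAux Tset hT p).1

lemma pickSeq_mem {α : Type} (Tset : ℕ → Set α) (hT : ∀ p, (Tset p).Infinite) (p : ℕ) :
    pickSeq Tset hT p ∈ Tset p := by
  cases p with
  | zero => exact (((hT 0).diff (Finset.finite_toSet ∅)).nonempty.some_mem).1
  | succ p => exact (((hT (p+1)).diff (Finset.finite_toSet _)).nonempty.some_mem).1

lemma pickSeq_mem_acc {α : Type} (Tset : ℕ → Set α) (hT : ∀ p, (Tset p).Infinite) (p : ℕ) :
    pickSeq Tset hT p ∈ (pickSeqAux Tset hT p).2 := by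
  cases p with
  | zero => exact Finset.mem_singleton_self _
  | succ p => exact Finset.mem_insert_self _ _

lemma pickSeq_acc_mono {α : Type} (Tset : ℕ → Set α) (hT : ∀ p, (Tset p).Infinite) :
    ∀ {p q : ℕ}, p ≤ q → (pickSeqAux Tset hT p).2 ⊆ (pickSeqAux Tset hT q).2 := by
  intro p q hpq
  induction q with
  | zero => have : p = 0 := by omega
            subst this; exact fun x hx => hx
  | succ q ih =>
    by_cases h : p = q + 1
    · subst h; exact fun x hx => hx
    · have hpq' : p ≤ q := by omega
      exact (ih hpq').trans (by intro x hx; exact Finset.mem_insert_of_mem hx)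

lemma pickSeq_not_mem_acc {α : Type} (Tset : ℕ → Set α) (hT : ∀ p, (Tset p).Infinite) (p : ℕ) :
    pickSeq Tset hT (p+1) ∉ (pickSeqAux Tset hT p).2 := by
  exact (((hT (p+1)).diff (Finset.finite_toSet _)).nonempty.some_mem).2

lemma pickSeq_injective {α : Type} (Tset : ℕ → Set α) (hT : ∀ p, (Tset p).Infinite) :
    Function.Injective (pickSeq Tset hT) := by
  have key : ∀ p q, p < q → pickSeq Tset hT p ≠ pickSeq Tset hT q := by
    intro p q hpq hEq
    obtain ⟨q', rfl⟩ : ∃ q', q = q' + 1 := ⟨q - 1, by omega⟩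
    have h1 : pickSeq Tset hT p ∈ (pickSeqAux Tset hT q').2 :=
      pickSeq_acc_mono Tset hT (by omega) (pickSeq_mem_acc Tset hT p)
    rw [hEq] at h1
    exact pickSeq_not_mem_acc Tset hT q' h1
  intro p q hEq
  rcases lt_trichotomy p q with h | h | h
  · exact absurd hEq (key p q h)
  · exact h
  · exact absurd hEq.symm (key q p h)

end AuxLemmas


section MainB
open Classical
variable {α : Type} [MeasurableSpace α] [MeasurableSingletonClass α] [Infinite α]

/-- Cumulative maximum of a function `g : α → ℕ → ℕ`. -/
noncomputable def psiMax (g : α → ℕ → ℕ) : ℕ → α → ℕ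
  | 0 => fun x => g x 0
  | n+1 => fun x => max (psiMax g n x) (g x (n+1))

lemma psiMax_measurable {g : α → ℕ → ℕ} (hg : Measurable g) (n : ℕ) :
    Measurable (psiMax g n) := by
  induction n with
  | zero => exact (measurable_pi_apply 0).comp hg
  | succ n ih => exact ih.max ((measurable_pi_apply (n+1)).comp hg)

lemma le_psiMax {g : α → ℕ → ℕ} (x : α) {k n : ℕ} (h : k ≤ n) : g x k ≤ psiMax g n x := by
  induction n with
  | zero =>
    have hk0 : k = 0 := by omega
    subst hk0; exact le_rfl
  | succ n ih =>
    by_cases hk : k = n+1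
    · subst hk; exact le_max_right _ _
    · exact (ih (by omega)).trans (le_max_left _ _)

lemma bounded_of_S1 (hS1 : S1 (BorelTau α) (BorelGamma α))
    (g : α → ℕ → ℕ) (hg : Measurable g) :
    ∃ b : ℕ → ℕ, ∀ x, {n | ¬ g x n ≤ b n}.Finite := by
  classical
  let e := Infinite.natEmbedding α
  let βf : α → ℕ := fun x => if h : ∃ k, e k = x then h.choose else 0
  have hβe : ∀ k, βf (e k) = k := by
    intro k
    have h : ∃ j, e j = e k := ⟨k, rfl⟩
    simp only [βf, dif_pos h]
    exact e.injective h.choose_spec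
  have hβmeas : Measurable βf := by
    apply measurable_to_countable'
    intro j
    by_cases hj : j = 0
    · subst hj
      have heq : βf ⁻¹' {0} = {e 0} ∪ (Set.range e)ᶜ := by
        ext x
        simp only [Set.mem_preimage, Set.mem_singleton_iff, Set.mem_union, Set.mem_compl_iff,
          Set.mem_range]
        constructor
        · intro hx
          by_cases hr : ∃ k, e k = x
          · obtain ⟨k, rfl⟩ := hr
            rw [hβe] at hx; subst hx; exact Or.inl rfl
          · exact Or.inr hr
        · rintro (rfl | hr)
          · exact hβe 0
          · simp only [βf, dif_neg hr]
      rw [heq]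
      exact (MeasurableSet.singleton _).union (Set.countable_range e).measurableSet.compl
    · have heq : βf ⁻¹' {j} = {e j} := by
        ext x
        simp only [Set.mem_preimage, Set.mem_singleton_iff]
        constructor
        · intro hx
          by_cases hr : ∃ k, e k = x
          · obtain ⟨k, rfl⟩ := hr
            rw [hβe] at hx; subst hx; rfl
          · simp only [βf, dif_neg hr] at hx
            exact absurd hx.symm hj
        · rintro rfl; exact hβe j
      rw [heq]; exact MeasurableSet.singleton _
  let G : ℕ → α → ℕ := fun n x => max (psiMax g n x) (βf x)
  let U : ℕ → ℕ → Set α := fun n m => {x | G n x ≤ m}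
  have hUmeas : ∀ n m, MeasurableSet (U n m) := by
    intro n m
    have hGmeas : Measurable (G n) := (psiMax_measurable hg n).max hβmeas
    exact hGmeas ((Set.to_countable {j | j ≤ m}).measurableSet)
  have hUnotuniv : ∀ n m, U n m ≠ Set.univ := by
    intro n m h
    have hx : e (m+1) ∈ U n m := h ▸ Set.mem_univ _
    have hx' : G n (e (m+1)) ≤ m := hx
    have h3 : βf (e (m+1)) ≤ G n (e (m+1)) := le_max_right _ _
    rw [hβe (m+1)] at h3
    omega
  have hUmono : ∀ n (m m' : ℕ), m ≤ m' → U n m ⊆ U n m' := by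
    intro n m m' h x hx
    exact le_trans (show G n x ≤ m from hx) h
  have hmemG : ∀ n x, x ∈ U n (G n x) := fun n x => (le_rfl : G n x ≤ G n x)
  have hgamma : ∀ n, IsGammaCover (Set.range (U n)) := by
    intro n
    have hcover : IsCover (Set.range (U n)) := by
      constructor
      · apply Set.eq_univ_iff_forall.mpr
        intro x
        exact ⟨U n (G n x), ⟨G n x, rfl⟩, hmemG n x⟩
      · rintro ⟨m, hm⟩
        exact hUnotuniv n m hm
    refine ⟨hcover, ?_, ?_⟩
    · by_contra hfin
      rw [Set.not_infinite] at hfin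
      obtain ⟨S, hS⟩ := exists_infinite_fiber_of_range_finite hfin
      have hsub : ∀ m, U n m ⊆ S := by
        intro m
        obtain ⟨m', hm', hlt⟩ := hS.exists_gt m
        intro x hx
        have hx2 : x ∈ U n m' := hUmono n m m' (le_of_lt hlt) hx
        rwa [hm'] at hx2
      have hSuniv : S = Set.univ :=
        Set.eq_univ_iff_forall.mpr (fun x => hsub (G n x) (hmemG n x))
      obtain ⟨m0, hm0⟩ := hS.nonempty
      exact hUnotuniv n m0 (hm0.trans hSuniv)
    · intro x
      have hsub : {A | A ∈ Set.range (U n) ∧ x ∉ A} ⊆ (U n) '' {m | m < G n x} := by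
        rintro A ⟨⟨m, rfl⟩, hx⟩
        refine ⟨m, ?_, rfl⟩
        show m < G n x
        exact lt_of_not_ge (fun hle => hx (show G n x ≤ m from hle))
      exact ((Set.finite_Iio _).image _).subset hsub
  have hmem : ∀ n, Set.range (U n) ∈ BorelTau α := by
    intro n
    refine ⟨Set.countable_range _, ?_, (hgamma n).isTauCover⟩
    rintro A ⟨m, rfl⟩
    exact hUmeas n m
  obtain ⟨V, hV, hVg⟩ := hS1 (fun n => Set.range (U n)) hmem
  obtain ⟨-, -, hγc, hγinf, hγfin⟩ := hVg
  have hVm : ∀ k, ∃ m, U k m = V k := fun k => hV k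
  let mk : ℕ → ℕ := fun k => (hVm k).choose
  have hmk_spec : ∀ k, U k (mk k) = V k := fun k => (hVm k).choose_spec
  let N : Set ℕ := {j | ∀ i, i < j → V i ≠ V j}
  have hNinj : ∀ {i j}, i ∈ N → j ∈ N → V i = V j → i = j := by
    intro i j hi hj hEq
    rcases lt_trichotomy i j with h | h | h
    · exact absurd hEq (hj i h)
    · exact h
    · exact absurd hEq.symm (hi j h)
  have hrange : Set.range V = V '' N := by
    apply Set.Subset.antisymm
    · rintro A ⟨j, rfl⟩
      have hne : {i | V i = V j}.Nonempty := ⟨j, rfl⟩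
      have hj0 : V (sInf {i | V i = V j}) = V j := Nat.sInf_mem hne
      refine ⟨sInf {i | V i = V j}, ?_, hj0⟩
      intro i hi hEq
      have hle : sInf {i | V i = V j} ≤ i := Nat.sInf_le (hEq.trans hj0)
      omega
    · rintro A ⟨j, _, rfl⟩; exact ⟨j, rfl⟩
  have hNinf : N.Infinite := by
    by_contra h
    rw [Set.not_infinite] at h
    exact hγinf (by rw [hrange]; exact h.image V)
  have hp : (setOf (· ∈ N)).Infinite := hNinf
  have hnth_mem : ∀ k, Nat.nth (· ∈ N) k ∈ N := fun k => Nat.nth_mem_of_infinite hp k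
  have hnth_mono : StrictMono (Nat.nth (· ∈ N)) := Nat.nth_strictMono hp
  refine ⟨fun k => mk (Nat.nth (· ∈ N) k), fun x => ?_⟩
  have hD : {i | x ∉ V (Nat.nth (· ∈ N) i)}.Finite := by
    have hinj : Set.InjOn (fun i => V (Nat.nth (· ∈ N) i)) {i | x ∉ V (Nat.nth (· ∈ N) i)} := by
      intro i _ j _ hEq
      exact hnth_mono.injective (hNinj (hnth_mem i) (hnth_mem j) hEq)
    apply Set.Finite.of_finite_image ?_ hinj
    apply (hγfin x).subset
    rintro A ⟨i, hi, rfl⟩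
    exact ⟨⟨Nat.nth (· ∈ N) i, rfl⟩, hi⟩
  obtain ⟨c, hc⟩ := hD.bddAbove
  apply (Set.finite_Iic c).subset
  intro k hk
  simp only [Set.mem_setOf_eq] at hk
  by_contra hkc
  have hck : c < k := lt_of_not_ge hkc
  have hkD : k ∉ {i | x ∉ V (Nat.nth (· ∈ N) i)} := by
    intro hmem
    have := hc hmem
    omega
  have hxV : x ∈ V (Nat.nth (· ∈ N) k) := not_not.mp hkD
  rw [← hmk_spec (Nat.nth (· ∈ N) k)] at hxV
  have hxV' : G (Nat.nth (· ∈ N) k) x ≤ mk (Nat.nth (· ∈ N) k) := hxV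
  have h1 : g x k ≤ G (Nat.nth (· ∈ N) k) x :=
    le_trans (le_psiMax x hnth_mono.le_apply) (le_max_left _ _)
  exact hk (le_trans h1 hxV')

end MainB


section MainConv
open Classical
variable {α : Type} [MeasurableSpace α] [MeasurableSingletonClass α] [Infinite α]

lemma S1_of_noTower_bounded
    (hA : ∀ f : α → Set ℕ, BorelMeasSets f → (∀ x, (f x).Infinite) → ¬ IsTower (Set.range f))
    (hB : ∀ g : α → (ℕ → ℕ), Measurable g → ∃ b : ℕ → ℕ, ∀ x, {n | ¬ g x n ≤ b n}.Finite) :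
    S1 (BorelTau α) (BorelGamma α) := by
  classical
  intro 𝒰 h𝒰
  have henum : ∀ n, ∃ U : ℕ → Set α, Function.Injective U ∧ Set.range U = 𝒰 n := by
    intro n
    obtain ⟨hcnt, hmeas, htau⟩ := h𝒰 n
    have hinf : (𝒰 n).Infinite := by
      have h1 := htau.1.2 (Classical.arbitrary α)
      exact h1.mono (fun A hA' => hA'.1)
    haveI := hcnt.to_subtype
    haveI := hinf.to_subtype
    haveI : Encodable (𝒰 n) := Encodable.ofCountable _
    haveI : Denumerable (𝒰 n) := Denumerable.ofEncodableOfInfinite _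
    let eqv := Denumerable.eqv (𝒰 n)
    refine ⟨fun i => (eqv.symm i).1, ?_, ?_⟩
    · intro i j hij
      exact eqv.symm.injective (Subtype.val_injective hij)
    · ext A
      constructor
      · rintro ⟨i, rfl⟩; exact (eqv.symm i).2
      · intro hA'; exact ⟨eqv ⟨A, hA'⟩, by simp⟩
  choose Uf hUinj hUrange using henum
  let F : ℕ → α → Set ℕ := fun n x => {m | x ∈ Uf n m}
  have hUfmem : ∀ n m, Uf n m ∈ 𝒰 n := by
    intro n m
    rw [← hUrange n]; exact ⟨m, rfl⟩
  have hFmeas : ∀ n, BorelMeasSets (F n) := by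
    intro n m
    exact (h𝒰 n).2.1 _ (hUfmem n m)
  have hFinf : ∀ n x, (F n x).Infinite := by
    intro n x
    obtain ⟨-, -, htau⟩ := h𝒰 n
    have hlarge := htau.1.2 x
    by_contra hfin
    rw [Set.not_infinite] at hfin
    apply hlarge
    apply Set.Finite.subset (hfin.image (Uf n))
    rintro A ⟨hA', hx⟩
    rw [← hUrange n] at hA'
    obtain ⟨m, rfl⟩ := hA'
    exact ⟨m, hx, rfl⟩
  have hFlin : ∀ n, LinQuasi (Set.range (F n)) := by
    rintro n a ⟨x, rfl⟩ b ⟨y, rfl⟩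
    obtain ⟨-, -, htau⟩ := h𝒰 n
    rcases htau.2 x y with h | h
    · left
      have hinj : Set.InjOn (Uf n) (F n x \ F n y) := fun i _ j _ hh => hUinj n hh
      apply Set.Finite.of_finite_image ?_ hinj
      apply h.subset
      rintro A ⟨m, ⟨hmx, hmy⟩, rfl⟩
      exact ⟨hUfmem n m, hmx, hmy⟩
    · right
      have hinj : Set.InjOn (Uf n) (F n y \ F n x) := fun i _ j _ hh => hUinj n hh
      apply Set.Finite.of_finite_image ?_ hinj
      apply h.subset
      rintro A ⟨m, ⟨hmy, hmx⟩, rfl⟩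
      exact ⟨hUfmem n m, hmy, hmx⟩
  have hpi : ∀ n, ∃ a, PseudoIntersection a (Set.range (F n)) := by
    intro n
    by_contra hno
    exact hA (F n) (hFmeas n) (hFinf n)
      ⟨by rintro a ⟨x, rfl⟩; exact hFinf n x, hFlin n, hno⟩
  choose a ha using hpi
  have hainf : ∀ n, (a n).Infinite := fun n => (ha n).1
  let em : (n : ℕ) → (ℕ ↪ (a n)) := fun n => (hainf n).natEmbedding
  let al : ℕ → ℕ → ℕ := fun n j => (em n j : ℕ)
  have hal_mem : ∀ n j, al n j ∈ a n := fun n j => (em n j).2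
  have hal_inj : ∀ n, Function.Injective (al n) := by
    intro n i j hh
    exact (em n).injective (Subtype.val_injective hh)
  have Hex : ∀ n x, ∃ K, ∀ j, K ≤ j → x ∈ Uf n (al n j) := by
    intro n x
    have hfin : (a n \ F n x).Finite := (ha n).2 (F n x) ⟨x, rfl⟩
    have hfin2 : {j | al n j ∈ a n \ F n x}.Finite := by
      apply Set.Finite.of_finite_image ?_ (fun i _ j _ hh => hal_inj n hh)
      apply hfin.subset
      rintro m ⟨j, hj, rfl⟩
      exact hj
    obtain ⟨c, hc⟩ := hfin2.bddAbove
    refine ⟨c+1, fun j hj => ?_⟩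
    have hnm : al n j ∉ a n \ F n x := by
      intro hmem
      have := hc hmem
      omega
    by_contra hmem
    exact hnm ⟨hal_mem n j, hmem⟩
  let hfn : ℕ → α → ℕ := fun n x => Nat.find (Hex n x)
  have hle_iff : ∀ n x K, hfn n x ≤ K ↔ ∀ j, K ≤ j → x ∈ Uf n (al n j) := by
    intro n x K
    constructor
    · intro hK j hj
      exact Nat.find_spec (Hex n x) j (le_trans hK hj)
    · intro hK
      exact Nat.find_le hK
  have hmeasle : ∀ n K, MeasurableSet {x | hfn n x ≤ K} := by
    intro n K
    have heq : {x | hfn n x ≤ K} = ⋂ (j : ℕ), ⋂ (_ : K ≤ j), Uf n (al n j) := by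
      ext x
      simp only [Set.mem_setOf_eq, Set.mem_iInter, hle_iff]
    rw [heq]
    exact MeasurableSet.iInter (fun j => MeasurableSet.iInter
      (fun hj => (h𝒰 n).2.1 _ (hUfmem n (al n j))))
  have hmeas : ∀ n, Measurable (fun x => hfn n x) := by
    intro n
    apply measurable_to_countable'
    intro K
    cases K with
    | zero =>
      have heq : (fun x => hfn n x) ⁻¹' {0} = {x | hfn n x ≤ 0} := by
        ext x; simp [Nat.le_zero]
      rw [heq]; exact hmeasle n 0
    | succ K =>
      have heq : (fun x => hfn n x) ⁻¹' {K+1} = {x | hfn n x ≤ K+1} \ {x | hfn n x ≤ K} := by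
        ext x
        simp only [Set.mem_preimage, Set.mem_singleton_iff, Set.mem_diff, Set.mem_setOf_eq]
        omega
      rw [heq]; exact (hmeasle n (K+1)).diff (hmeasle n K)
  obtain ⟨b, hb⟩ := hB (fun x n => hfn n x) (measurable_pi_lambda _ (fun n => hmeas n))
  let V : ℕ → Set α := fun n => Uf n (al n (b n))
  have hVmem : ∀ n, V n ∈ 𝒰 n := fun n => hUfmem n (al n (b n))
  have hVuniv : ∀ n, V n ≠ Set.univ := by
    intro n hEq
    obtain ⟨-, -, htau⟩ := h𝒰 n
    exact htau.1.1.2 (hEq ▸ hVmem n)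
  have hkey : ∀ x n, hfn n x ≤ b n → x ∈ V n := by
    intro x n hn
    exact Nat.find_spec (Hex n x) (b n) hn
  refine ⟨V, hVmem, ?_, ?_, ?_⟩
  · exact Set.countable_range _
  · rintro A ⟨n, rfl⟩
    exact (h𝒰 n).2.1 _ (hVmem n)
  refine ⟨⟨?_, ?_⟩, ?_, ?_⟩
  · apply Set.eq_univ_iff_forall.mpr
    intro x
    obtain ⟨n, hn⟩ := (hb x).infinite_compl.nonempty
    simp only [Set.mem_compl_iff, Set.mem_setOf_eq, not_not] at hn
    exact ⟨V n, ⟨n, rfl⟩, hkey x n hn⟩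
  · rintro ⟨n, hn⟩
    exact hVuniv n hn
  · by_contra hfin
    rw [Set.not_infinite] at hfin
    obtain ⟨S, hS⟩ := exists_infinite_fiber_of_range_finite hfin
    have hSuniv : S = Set.univ := by
      apply Set.eq_univ_iff_forall.mpr
      intro x
      obtain ⟨n, hn1, hn2⟩ := (hS.diff (hb x)).nonempty
      simp only [Set.mem_setOf_eq] at hn1 hn2
      rw [← hn1]
      exact hkey x n (not_not.mp hn2)
    obtain ⟨n0, hn0⟩ := hS.nonempty
    exact hVuniv n0 (hn0.trans hSuniv)
  · intro x
    have hsub : {A | A ∈ Set.range V ∧ x ∉ A} ⊆ V '' {n | ¬ hfn n x ≤ b n} := by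
      rintro A ⟨⟨n, rfl⟩, hx⟩
      exact ⟨n, fun hle => hx (hkey x n hle), rfl⟩
    exact ((hb x).image V).subset hsub

end MainConv


section MainA
open Classical
variable {α : Type} [MeasurableSpace α] [MeasurableSingletonClass α] [Infinite α]

lemma pseudo_of_S1 (hS1 : S1 (BorelTau α) (BorelGamma α))
    (f : α → Set ℕ) (hmeas : BorelMeasSets f) (hinf : ∀ x, (f x).Infinite)
    (hlin : ∀ x y : α, AlmostSubset (f x) (f y) ∨ AlmostSubset (f y) (f x)) :
    ∃ a, PseudoIntersection a (Set.range f) := by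
  classical
  let U : ℕ → Set α := fun n => {x | n ∈ f x}
  have hUmeas : ∀ n, MeasurableSet (U n) := hmeas
  let T : Set ℕ := {n | U n = Set.univ}
  by_cases hT : T.Infinite
  · refine ⟨T, hT, ?_⟩
    rintro b ⟨x, rfl⟩
    have hTe : T \ f x = ∅ := by
      ext n
      simp only [Set.mem_diff, Set.mem_empty_iff_false, iff_false, not_and, not_not]
      intro hn
      exact (show x ∈ U n from hn ▸ Set.mem_univ x)
    show (T \ f x).Finite
    rw [hTe]
    exact Set.finite_empty
  rw [Set.not_infinite] at hT
  let cls : ℕ → Set ℕ := fun n => {m | U m = U n}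
  have hcls_self : ∀ n, n ∈ cls n := fun n => rfl
  have hdich : ∀ x n, n ∈ f x → cls n ⊆ f x := by
    intro x n hn m hm
    exact (show x ∈ U m from (show U m = U n from hm) ▸ hn)
  have hdich2 : ∀ y n, n ∉ f y → cls n ∩ f y = ∅ := by
    intro y n hn
    ext m
    simp only [Set.mem_inter_iff, Set.mem_empty_iff_false, iff_false, not_and]
    intro hm hmf
    exact hn (show y ∈ U n from (show U m = U n from hm) ▸ hmf)
  let R : Set ℕ := {n | ∀ m, m < n → U m ≠ U n}
  have hRrep : ∀ n, sInf (cls n) ∈ R ∧ U (sInf (cls n)) = U n := by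
    intro n
    have hne : (cls n).Nonempty := ⟨n, hcls_self n⟩
    have hmem : sInf (cls n) ∈ cls n := Nat.sInf_mem hne
    refine ⟨?_, hmem⟩
    intro m hm hEq
    have hmcls : m ∈ cls n := by
      show U m = U n
      rw [hEq]
      exact hmem
    have := Nat.sInf_le hmcls
    omega
  have hRinj : ∀ {n m}, n ∈ R → m ∈ R → U n = U m → n = m := by
    intro n m hn hm hEq
    rcases lt_trichotomy n m with h | h | h
    · exact absurd hEq (hm n h)
    · exact h
    · exact absurd hEq.symm (hn m h)
  let fstar : α → Set ℕ := fun x => {n | n ∈ R ∧ x ∈ U n}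
  by_cases hbad : ∃ x, ({n | n ∈ fstar x ∧ n ∉ T}).Finite ∧
      ∀ n, n ∈ f x → n ∉ T → (cls n).Infinite → (U n).Finite
  · -- coarse bad point: direct construction of a pseudo-intersection
    obtain ⟨x₀, hfs, hval⟩ := hbad
    have hE : {z | ¬ AlmostSubset (f x₀) (f z)}.Finite := by
      have hJfin : {n | n ∈ fstar x₀ ∧ n ∉ T ∧ (cls n).Infinite}.Finite :=
        hfs.subset (fun n hn => ⟨hn.1, hn.2.1⟩)
      have hsub : {z | ¬ AlmostSubset (f x₀) (f z)} ⊆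
          ⋃ n ∈ {n | n ∈ fstar x₀ ∧ n ∉ T ∧ (cls n).Infinite}, U n := by
        intro z hz
        have hzx : AlmostSubset (f z) (f x₀) := (hlin z x₀).resolve_right hz
        have hzi : ((f z ∩ f x₀) \ T).Infinite := by
          have h1 : (f z ∩ f x₀).Infinite := by
            by_contra hfin
            rw [Set.not_infinite] at hfin
            apply hinf z
            have hsp : f z ⊆ (f z \ f x₀) ∪ (f z ∩ f x₀) := by
              intro n hn
              by_cases h : n ∈ f x₀
              · exact Or.inr ⟨hn, h⟩
              · exact Or.inl ⟨hn, h⟩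
            exact (hzx.union hfin).subset hsp
          exact h1.diff hT
        have hcov : ((f z ∩ f x₀) \ T) ⊆ ⋃ n ∈ {n | n ∈ fstar x₀ ∧ n ∉ T}, cls n := by
          intro m hm
          obtain ⟨⟨hmz, hmx⟩, hmT⟩ := hm
          refine Set.mem_iUnion₂.mpr ⟨sInf (cls m), ⟨⟨(hRrep m).1, ?_⟩, ?_⟩, ?_⟩
          · exact (show x₀ ∈ U (sInf (cls m)) from by rw [(hRrep m).2]; exact hmx)
          · intro hmem
            exact hmT (show U m = Set.univ from by
              rw [← (hRrep m).2]; exact hmem)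
          · show U m = U (sInf (cls m))
            exact ((hRrep m).2).symm
        obtain ⟨n, hn, hfib⟩ := exists_infinite_fiber' hzi hfs hcov
        have hclsinf : (cls n).Infinite := (hfib.mono Set.inter_subset_right)
        obtain ⟨m, hm1, hm2⟩ := hfib.nonempty
        have hmz : m ∈ f z := hm1.1.1
        have hnfz : n ∈ f z := by
          have hcm : cls m ⊆ f z := hdich z m hmz
          apply hcm
          show U n = U m
          exact (show U m = U n from hm2).symm
        refine Set.mem_iUnion₂.mpr ⟨n, ⟨hn.1, hn.2, hclsinf⟩, ?_⟩
        exact (show z ∈ U n from hnfz)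
      apply Set.Finite.subset ?_ hsub
      apply hJfin.biUnion
      intro n hn
      exact hval n hn.1.2 hn.2.1 hn.2.2
    obtain ⟨z₀, hz₀, hzmin⟩ := exists_almost_min hlin
      (insert x₀ {z | ¬ AlmostSubset (f x₀) (f z)}) (hE.insert x₀) ⟨x₀, Set.mem_insert _ _⟩
    refine ⟨f z₀, hinf z₀, ?_⟩
    rintro b ⟨w, rfl⟩
    by_cases hw : AlmostSubset (f x₀) (f w)
    · exact almostSubset_trans (hzmin x₀ (Set.mem_insert _ _)) hw
    · exact hzmin w (Set.mem_insert_of_mem _ hw)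
  · -- good case: build the master τ-cover and apply S1
    push_neg at hbad
    let I : Set ℕ := {n | n ∈ R ∧ n ∉ T ∧ (cls n).Infinite ∧ (U n).Infinite}
    let Tset : ℕ → Set α := fun p =>
      if (Nat.unpair p).1 ∈ I then U (Nat.unpair p).1 else Set.univ
    have hTset : ∀ p, (Tset p).Infinite := by
      intro p
      by_cases h : (Nat.unpair p).1 ∈ I
      · simpa only [Tset, if_pos h] using h.2.2.2
      · simpa only [Tset, if_neg h] using Set.infinite_univ
    let t : ℕ → ℕ → α := fun n k => pickSeq Tset hTset (Nat.pair n k)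
    have hTsetI : ∀ n k, n ∈ I → Tset (Nat.pair n k) = U n := by
      intro n k hn
      simp only [Tset, Nat.unpair_pair]
      exact if_pos hn
    have ht_mem : ∀ n k, n ∈ I → t n k ∈ U n := by
      intro n k hn
      have hp := pickSeq_mem Tset hTset (Nat.pair n k)
      rwa [hTsetI n k hn] at hp
    have ht_inj : ∀ {n k n' k'}, t n k = t n' k' → n = n' ∧ k = k' := by
      intro n k n' k' h
      have h1 := pickSeq_injective Tset hTset h
      exact Nat.pair_eq_pair.mp h1
    let W : Set (Set α) := {A | ∃ n, (n ∉ T ∧ A = U n) ∨ (n ∈ I ∧ ∃ k, A = U n \ {t n k})}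
    have hWcnt : W.Countable := by
      refine Set.Countable.mono ?_ ((Set.countable_range (fun n => U n)).union
        (Set.countable_range (fun p : ℕ × ℕ => U p.1 \ {t p.1 p.2})))
      rintro A ⟨n, h | ⟨hn, k, hk⟩⟩
      · exact Or.inl ⟨n, h.2.symm⟩
      · exact Or.inr ⟨(n, k), hk.symm⟩
    have hWmeas : ∀ A ∈ W, MeasurableSet A := by
      rintro A ⟨n, h | ⟨hn, k, rfl⟩⟩
      · rw [h.2]; exact hUmeas n
      · exact (hUmeas n).diff (MeasurableSet.singleton _)
    have hWuniv : Set.univ ∉ W := by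
      rintro ⟨n, h | ⟨hn, k, hk⟩⟩
      · exact h.1 h.2.symm
      · have htm : t n k ∈ U n := ht_mem n k hn
        have hmem : t n k ∈ U n \ {t n k} := by rw [← hk]; exact Set.mem_univ _
        exact hmem.2 rfl
    have hWcover : ⋃₀ W = Set.univ := by
      apply Set.eq_univ_iff_forall.mpr
      intro x
      obtain ⟨n, hn⟩ := ((hinf x).diff hT).nonempty
      exact ⟨U n, ⟨n, Or.inl ⟨hn.2, rfl⟩⟩, hn.1⟩
    have hWlarge : ∀ x : α, {A | A ∈ W ∧ x ∈ A}.Infinite := by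
      intro x
      by_cases hfx : {n | n ∈ fstar x ∧ n ∉ T}.Infinite
      · haveI := hfx.to_subtype
        apply Set.infinite_of_injective_forall_mem
          (f := fun (n : ↥{n | n ∈ fstar x ∧ n ∉ T}) => U n.1)
        · intro n m hEq
          exact Subtype.ext (hRinj n.2.1.1 m.2.1.1 hEq)
        · intro n
          exact ⟨⟨n.1, Or.inl ⟨n.2.2, rfl⟩⟩, n.2.1.2⟩
      · have hfx' : {n | n ∈ fstar x ∧ n ∉ T}.Finite := Set.not_infinite.mp hfx
        obtain ⟨n, hnf, hnT, hcls, hUinf⟩ := hbad x hfx'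
        have hrR := (hRrep n).1
        have hrU : U (sInf (cls n)) = U n := (hRrep n).2
        have hrI : sInf (cls n) ∈ I := by
          refine ⟨hrR, ?_, ?_, ?_⟩
          · intro hmem
            exact hnT (show U n = Set.univ from by
              rw [← hrU]; exact hmem)
          · have hcleq : cls (sInf (cls n)) = cls n := by
              ext m
              show U m = U (sInf (cls n)) ↔ U m = U n
              rw [hrU]
            show (cls (sInf (cls n))).Infinite
            rw [hcleq]
            exact hcls
          · show (U (sInf (cls n))).Infinite
            rw [hrU]
            exact hUinf
        have hxU : x ∈ U (sInf (cls n)) := by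
          rw [hrU]
          exact (show x ∈ U n from hnf)
        have hSinf : {k | t (sInf (cls n)) k ≠ x}.Infinite := by
          have hss : {k | t (sInf (cls n)) k = x}.Subsingleton := by
            intro i hi j hj
            exact (ht_inj (hi.trans hj.symm)).2
          have heq2 : {k | t (sInf (cls n)) k ≠ x} =
              Set.univ \ {k | t (sInf (cls n)) k = x} := by
            ext k; simp [Set.mem_diff]
          rw [heq2]
          exact Set.infinite_univ.diff hss.finite
        haveI := hSinf.to_subtype
        apply Set.infinite_of_injective_forall_mem
          (f := fun (k : ↥{k | t (sInf (cls n)) k ≠ x}) => U (sInf (cls n)) \ {t (sInf (cls n)) k.1})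
        · intro i j hEq
          apply Subtype.ext
          by_contra hne
          have htne : t (sInf (cls n)) i.1 ≠ t (sInf (cls n)) j.1 :=
            fun h => hne (ht_inj h).2
          have hmem2 : t (sInf (cls n)) j.1 ∈ U (sInf (cls n)) \ {t (sInf (cls n)) i.1} :=
            ⟨ht_mem _ j.1 hrI, fun h => htne (Set.eq_of_mem_singleton h).symm⟩
          have hEq' : U (sInf (cls n)) \ {t (sInf (cls n)) i.1} =
              U (sInf (cls n)) \ {t (sInf (cls n)) j.1} := hEq
          rw [hEq'] at hmem2
          exact hmem2.2 rfl
        · intro k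
          refine ⟨⟨sInf (cls n), Or.inr ⟨hrI, k.1, rfl⟩⟩, hxU, ?_⟩
          intro h
          exact k.2 (Set.eq_of_mem_singleton h).symm
    have hWpair : ∀ x y : α,
        {A | A ∈ W ∧ x ∈ A ∧ y ∉ A}.Finite ∨ {A | A ∈ W ∧ y ∈ A ∧ x ∉ A}.Finite := by
      have key : ∀ x y : α, AlmostSubset (f x) (f y) →
          {A | A ∈ W ∧ x ∈ A ∧ y ∉ A}.Finite := by
        intro x y hxy
        have hsub : {A | A ∈ W ∧ x ∈ A ∧ y ∉ A} ⊆
            (fun n => U n) '' (f x \ f y) ∪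
            {A | ∃ n k, t n k = y ∧ A = U n \ {t n k}} := by
          rintro A ⟨⟨n, hW⟩, hx, hy⟩
          rcases hW with ⟨hnT, rfl⟩ | ⟨hnI, k, rfl⟩
          · refine Or.inl ⟨n, ⟨hx, ?_⟩, rfl⟩
            exact hy
          · by_cases hyt : y = t n k
            · exact Or.inr ⟨n, k, hyt.symm, rfl⟩
            · have hyU : y ∉ U n := by
                intro hyU
                exact hy ⟨hyU, fun h => hyt (Set.eq_of_mem_singleton h)⟩
              have hclsx : cls n ⊆ f x := hdich x n hx.1
              have hclsy : cls n ∩ f y = ∅ := hdich2 y n hyU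
              have hclssub : cls n ⊆ f x \ f y := by
                intro m hm
                refine ⟨hclsx hm, fun hmy => ?_⟩
                have hmm : m ∈ cls n ∩ f y := ⟨hm, hmy⟩
                rw [hclsy] at hmm
                exact hmm
              exact absurd (hxy.subset hclssub) hnI.2.2.1
        have hsingle : {A | ∃ n k, t n k = y ∧ A = U n \ {t n k}}.Subsingleton := by
          rintro A ⟨n, k, hty, rfl⟩ B ⟨n', k', hty', rfl⟩
          obtain ⟨rfl, rfl⟩ := ht_inj (hty.trans hty'.symm)
          rfl
        exact ((hxy.image _).union hsingle.finite).subset hsub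
      intro x y
      rcases hlin x y with h | h
      · exact Or.inl (key x y h)
      · exact Or.inr (key y x h)
    have hWtau : IsTauCover W := ⟨⟨⟨hWcover, hWuniv⟩, hWlarge⟩, hWpair⟩
    obtain ⟨V, hV, hVg⟩ := hS1 (fun _ => W) (fun _ => ⟨hWcnt, hWmeas, hWtau⟩)
    obtain ⟨-, -, hγc, hγinf, hγfin⟩ := hVg
    let μ : Set α → ℕ := fun A =>
      if h : ∃ n, (n ∉ T ∧ A = U n) ∨ (n ∈ I ∧ ∃ k, A = U n \ {t n k}) then h.choose else 0
    have hμ : ∀ A, A ∈ W →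
        (μ A ∉ T ∧ A = U (μ A)) ∨ (μ A ∈ I ∧ ∃ k, A = U (μ A) \ {t (μ A) k}) := by
      intro A hA
      have h : ∃ n, (n ∉ T ∧ A = U n) ∨ (n ∈ I ∧ ∃ k, A = U n \ {t n k}) := hA
      simp only [μ, dif_pos h]
      exact h.choose_spec
    have hμsub : ∀ A, A ∈ W → A ⊆ U (μ A) := by
      intro A hA
      rcases hμ A hA with ⟨-, h2⟩ | ⟨-, k, h2⟩
      · exact h2.subset
      · exact Set.Subset.trans h2.subset Set.diff_subset
    have hμuniv : ∀ A, A ∈ W → U (μ A) ≠ Set.univ := by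
      intro A hA
      rcases hμ A hA with ⟨hT', -⟩ | ⟨hI', -⟩
      · exact fun h => hT' h
      · exact fun h => hI'.2.1 h
    have hrangeW : Set.range V ⊆ W := by rintro A ⟨j, rfl⟩; exact hV j
    refine ⟨μ '' Set.range V, ?_, ?_⟩
    · by_contra hfin
      rw [Set.not_infinite] at hfin
      have hcov : Set.range V ⊆ ⋃ a ∈ μ '' Set.range V, {A | μ A = a} := by
        intro A hA
        exact Set.mem_iUnion₂.mpr ⟨μ A, ⟨A, hA, rfl⟩, rfl⟩
      obtain ⟨a, ha, hfib⟩ := exists_infinite_fiber' hγinf hfin hcov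
      obtain ⟨A₀, hA₀⟩ := hfib.nonempty
      have hUa : U a ≠ Set.univ := by
        rw [← hA₀.2]
        exact hμuniv A₀ (hrangeW hA₀.1)
      obtain ⟨z, hz⟩ := (Set.ne_univ_iff_exists_notMem _).mp hUa
      have hsub2 : Set.range V ∩ {A | μ A = a} ⊆ {A | A ∈ Set.range V ∧ z ∉ A} := by
        rintro A ⟨hAr, hAa⟩
        refine ⟨hAr, fun hzA => hz ?_⟩
        have hzU := hμsub A (hrangeW hAr) hzA
        rwa [hAa] at hzU
      exact hfib ((hγfin z).subset hsub2)
    · rintro b ⟨w, rfl⟩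
      have hsub3 : (μ '' Set.range V) \ f w ⊆ μ '' {A | A ∈ Set.range V ∧ w ∉ A} := by
        rintro m ⟨⟨A, hAr, rfl⟩, hmw⟩
        refine ⟨A, ⟨hAr, fun hwA => hmw ?_⟩, rfl⟩
        exact hμsub A (hrangeW hAr) hwA
      show ((μ '' Set.range V) \ f w).Finite
      exact ((hγfin w).image μ).subset hsub3

end MainA

/-- `X` satisfies S₁(B_T,B_Γ) iff no Borel image of `X` in `[ℕ]^∞` is a tower
and every Borel image of `X` in `ℕ^ℕ` is bounded with respect to `≤*`. -/
theorem statement9 (X : Set ℝ) (hX : X.Infinite) :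
    S1 (BorelTau ↥X) (BorelGamma ↥X) ↔
      ((∀ f : ↥X → Set ℕ, BorelMeasSets f → (∀ x, (f x).Infinite) →
          ¬ IsTower (Set.range f)) ∧
       (∀ g : ↥X → (ℕ → ℕ), Measurable g →
          ∃ b : ℕ → ℕ, ∀ x, {n | ¬ g x n ≤ b n}.Finite)) := by
  haveI : Infinite ↥X := hX.to_subtype
  constructor
  · intro hS1
    constructor
    · intro f hf hinff hTower
      obtain ⟨hinf', hlinq, hno⟩ := hTower
      have hlin : ∀ x y : ↥X, AlmostSubset (f x) (f y) ∨ AlmostSubset (f y) (f x) :=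
        fun x y => hlinq (f x) ⟨x, rfl⟩ (f y) ⟨y, rfl⟩
      exact hno (pseudo_of_S1 hS1 f hf hinff hlin)
    · intro g hg
      exact bounded_of_S1 hS1 g hg
  · rintro ⟨hA, hB⟩
    exact S1_of_noTower_bounded hA hB

end TauCoverPaper
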